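/- Let Σ and X be topological spaces and let (R_n)_{n∈ℕ} be a locally finite family of closed subsets of X whose union is X, such that R_n ∩ R_m = ∅ whenever m ≥ n + 2. Suppose that for each n there is a homeomorphism h_n from R_n (with the subspace topology) onto Σ × [n, n+1] such that h_n maps R_n ∩ R_{n+1} onto Σ × {n+1} for every n, and h_n maps R_{n-1} ∩ R_n onto Σ × {n} for every n ≥ 1. Then X is homeomorphic to Σ × [0, ∞). -/

import Mathlib

set_option linter.unusedSectionVars false

open Set

section Glue

variable {Y X : Type*} [TopologicalSpace Y] [TopologicalSpace X] {R : ℕ → Set X}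

private lemma glue_bmem (n : ℕ) :
    (((n + 1 : ℕ) : ℝ)) ∈ Set.Icc (((n + 1 : ℕ)) : ℝ) (((n + 1 : ℕ) : ℝ) + 1) :=
  ⟨le_refl _, by linarith⟩

private lemma glue_tmem (n : ℕ) : ((n : ℝ) + 1) ∈ Set.Icc (n : ℝ) ((n : ℝ) + 1) :=
  ⟨by linarith, le_refl _⟩

private lemma mem_of_image_slice {A B : Set X} {a b : ℝ}
    (e : ↥A ≃ₜ Y × ↥(Set.Icc a b)) {S : Set (Y × ↥(Set.Icc a b))}
    (hinv : ⇑e '' {x : ↥A | (x : X) ∈ B} = S) {p : Y × ↥(Set.Icc a b)} (hp : p ∈ S) :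
    (↑(e.symm p) : X) ∈ B := by
  rw [← hinv] at hp
  obtain ⟨z, hz, hze⟩ := hp
  have : e.symm p = z := by rw [← hze, Homeomorph.symm_apply_apply]
  rw [this]; exact hz

private lemma apply_mem_slice {A B : Set X} {a b : ℝ}
    (e : ↥A ≃ₜ Y × ↥(Set.Icc a b)) {S : Set (Y × ↥(Set.Icc a b))}
    (hinv : ⇑e '' {x : ↥A | (x : X) ∈ B} = S) {x : ↥A} (hx : (x : X) ∈ B) :
    e x ∈ S := hinv ▸ Set.mem_image_of_mem _ hx

/-- the correction homeomorphism of `Y` making `h (n+1)` compatible with `e` on the common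
boundary `R n ∩ R (n+1)`. -/
noncomputable def psi (h : ∀ n : ℕ, ↥(R n) ≃ₜ Y × ↥(Set.Icc (n : ℝ) (n + 1))) (n : ℕ)
    (hd : ⇑(h (n+1)) '' {x : ↥(R (n+1)) | (x : X) ∈ R n} =
      {p : Y × ↥(Set.Icc (((n+1:ℕ)) : ℝ) (((n+1:ℕ) : ℝ) + 1)) | (p.2 : ℝ) = ((n+1:ℕ) : ℝ)})
    (e : ↥(R n) ≃ₜ Y × ↥(Set.Icc (n : ℝ) ((n : ℝ) + 1)))
    (hinv : ⇑e '' {x : ↥(R n) | (x : X) ∈ R (n+1)} =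
      {p : Y × ↥(Set.Icc (n : ℝ) ((n : ℝ) + 1)) | (p.2 : ℝ) = (n : ℝ) + 1}) :
    Y ≃ₜ Y where
  toFun y := (e ⟨((h (n+1)).symm (y, ⟨((n+1:ℕ) : ℝ), glue_bmem n⟩) : X),
      mem_of_image_slice (h (n+1)) hd rfl⟩).1
  invFun y := (h (n+1) ⟨(e.symm (y, ⟨(n : ℝ) + 1, glue_tmem n⟩) : X),
      mem_of_image_slice e hinv rfl⟩).1
  left_inv y := by
    set z := (h (n+1)).symm (y, ⟨((n+1:ℕ) : ℝ), glue_bmem n⟩) with hzdef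
    set zhat : ↥(R n) := ⟨(z : X), mem_of_image_slice (h (n+1)) hd rfl⟩ with hzhat
    have hmem : ((zhat : X)) ∈ R (n+1) := z.2
    have h2 : ((e zhat).2 : ℝ) = (n : ℝ) + 1 := apply_mem_slice e hinv hmem
    have key : ((e zhat).1, (⟨(n : ℝ) + 1, glue_tmem n⟩ : ↥(Set.Icc (n:ℝ) ((n:ℝ)+1)))) =
        e zhat := by
      refine Prod.ext rfl (Subtype.ext ?_)
      exact h2.symm
    show (h (n+1) ⟨(e.symm ((e zhat).1, ⟨(n : ℝ) + 1, glue_tmem n⟩) : X), _⟩).1 = y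
    have hs : e.symm ((e zhat).1, (⟨(n : ℝ) + 1, glue_tmem n⟩ :
        ↥(Set.Icc (n:ℝ) ((n:ℝ)+1)))) = zhat := by rw [key, Homeomorph.symm_apply_apply]
    have hsub : (⟨(e.symm ((e zhat).1, ⟨(n : ℝ) + 1, glue_tmem n⟩) : X),
        mem_of_image_slice e hinv rfl⟩ : ↥(R (n+1))) = z := by
      exact Subtype.ext (congrArg (Subtype.val : ↥(R n) → X) hs)
    rw [hsub, hzdef, Homeomorph.apply_symm_apply]
  right_inv y := by
    set w := e.symm (y, ⟨(n : ℝ) + 1, glue_tmem n⟩) with hwdef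
    set what : ↥(R (n+1)) := ⟨(w : X), mem_of_image_slice e hinv rfl⟩ with hwhat
    have hmem : ((what : X)) ∈ R n := w.2
    have h2 : ((h (n+1) what).2 : ℝ) = ((n+1:ℕ) : ℝ) := apply_mem_slice (h (n+1)) hd hmem
    have key : ((h (n+1) what).1, (⟨((n+1:ℕ) : ℝ), glue_bmem n⟩ :
        ↥(Set.Icc (((n+1:ℕ)):ℝ) (((n+1:ℕ):ℝ)+1)))) = h (n+1) what :=
      Prod.ext rfl (Subtype.ext h2.symm)
    show (e ⟨((h (n+1)).symm ((h (n+1) what).1, ⟨((n+1:ℕ) : ℝ), glue_bmem n⟩) : X), _⟩).1 = y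
    have hs : (h (n+1)).symm ((h (n+1) what).1, (⟨((n+1:ℕ) : ℝ), glue_bmem n⟩ :
        ↥(Set.Icc (((n+1:ℕ)):ℝ) (((n+1:ℕ):ℝ)+1)))) = what := by
      rw [key, Homeomorph.symm_apply_apply]
    have hsub : (⟨((h (n+1)).symm ((h (n+1) what).1, ⟨((n+1:ℕ) : ℝ), glue_bmem n⟩) : X),
        mem_of_image_slice (h (n+1)) hd rfl⟩ : ↥(R n)) = w := by
      exact Subtype.ext (congrArg (Subtype.val : ↥(R (n+1)) → X) hs)
    rw [hsub, hwdef, Homeomorph.apply_symm_apply]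
  continuous_toFun := by
    apply continuous_fst.comp
    apply e.continuous.comp
    apply Continuous.subtype_mk
    apply continuous_subtype_val.comp
    exact (h (n+1)).symm.continuous.comp (continuous_id.prodMk continuous_const)
  continuous_invFun := by
    apply continuous_fst.comp
    apply (h (n+1)).continuous.comp
    apply Continuous.subtype_mk
    apply continuous_subtype_val.comp
    exact e.symm.continuous.comp (continuous_id.prodMk continuous_const)

private lemma prodMap_image_slice {Z : Type*} (ψ : Y ≃ Y) {P : Z → Prop} :
    (fun p : Y × Z => (ψ p.1, p.2)) '' {p : Y × Z | P p.2} = {p : Y × Z | P p.2} := by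
  ext ⟨a, b⟩
  constructor
  · rintro ⟨⟨u, v⟩, hv, heq⟩
    obtain ⟨h1, h2⟩ := Prod.mk.injEq .. ▸ heq
    subst h2
    exact hv
  · intro hb
    exact ⟨(ψ.symm a, b), hb, by simp⟩

/-- One step of the correction. -/
noncomputable def glueStep (h : ∀ n : ℕ, ↥(R n) ≃ₜ Y × ↥(Set.Icc (n : ℝ) (n + 1))) (n : ℕ)
    (hu : ⇑(h (n+1)) '' {x : ↥(R (n+1)) | (x : X) ∈ R (n+1+1)} =
      {p : Y × ↥(Set.Icc (((n+1:ℕ)) : ℝ) (((n+1:ℕ) : ℝ) + 1)) | (p.2 : ℝ) = ((n+1:ℕ) : ℝ) + 1})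
    (hd : ⇑(h (n+1)) '' {x : ↥(R (n+1)) | (x : X) ∈ R n} =
      {p : Y × ↥(Set.Icc (((n+1:ℕ)) : ℝ) (((n+1:ℕ) : ℝ) + 1)) | (p.2 : ℝ) = ((n+1:ℕ) : ℝ)})
    (e : ↥(R n) ≃ₜ Y × ↥(Set.Icc (n : ℝ) ((n : ℝ) + 1)))
    (hinv : ⇑e '' {x : ↥(R n) | (x : X) ∈ R (n+1)} =
      {p : Y × ↥(Set.Icc (n : ℝ) ((n : ℝ) + 1)) | (p.2 : ℝ) = (n : ℝ) + 1}) :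
    {e' : ↥(R (n+1)) ≃ₜ Y × ↥(Set.Icc (((n+1:ℕ)) : ℝ) (((n+1:ℕ) : ℝ) + 1)) //
      ⇑e' '' {x : ↥(R (n+1)) | (x : X) ∈ R (n+1+1)} =
        {p : Y × ↥(Set.Icc (((n+1:ℕ)) : ℝ) (((n+1:ℕ) : ℝ) + 1)) |
          (p.2 : ℝ) = ((n+1:ℕ) : ℝ) + 1}} := by
  refine ⟨(h (n+1)).trans ((psi h n hd e hinv).prodCongr (Homeomorph.refl _)), ?_⟩
  have hcoe : ⇑((h (n+1)).trans ((psi h n hd e hinv).prodCongr (Homeomorph.refl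
      (↥(Set.Icc (((n+1:ℕ)) : ℝ) (((n+1:ℕ) : ℝ) + 1)))))) =
      ⇑((psi h n hd e hinv).prodCongr (Homeomorph.refl
        (↥(Set.Icc (((n+1:ℕ)) : ℝ) (((n+1:ℕ) : ℝ) + 1))))) ∘ ⇑(h (n+1)) := rfl
  rw [hcoe, Set.image_comp, hu]
  exact prodMap_image_slice (Z := ↥(Set.Icc (((n+1:ℕ)) : ℝ) (((n+1:ℕ) : ℝ) + 1))) (P := fun b => (b : ℝ) = ((n+1:ℕ) : ℝ) + 1) (psi h n hd e hinv).toEquiv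

/-- The corrected homeomorphisms, built recursively so that consecutive ones agree on the
common boundary, together with the invariant that the upper boundary goes to the top slice. -/
noncomputable def glueK (h : ∀ n : ℕ, ↥(R n) ≃ₜ Y × ↥(Set.Icc (n : ℝ) (n + 1)))
    (hup : ∀ n : ℕ, ⇑(h n) '' {x : ↥(R n) | (x : X) ∈ R (n + 1)} =
      {p : Y × ↥(Set.Icc (n : ℝ) (n + 1)) | (p.2 : ℝ) = n + 1})
    (hd : ∀ n : ℕ, ⇑(h (n+1)) '' {x : ↥(R (n+1)) | (x : X) ∈ R n} =
      {p : Y × ↥(Set.Icc (((n+1:ℕ)) : ℝ) (((n+1:ℕ) : ℝ) + 1)) | (p.2 : ℝ) = ((n+1:ℕ) : ℝ)}) :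
    ∀ n : ℕ, {e : ↥(R n) ≃ₜ Y × ↥(Set.Icc (n : ℝ) (n + 1)) //
      ⇑e '' {x : ↥(R n) | (x : X) ∈ R (n + 1)} =
        {p : Y × ↥(Set.Icc (n : ℝ) (n + 1)) | (p.2 : ℝ) = n + 1}}
  | 0 => ⟨h 0, hup 0⟩
  | (n+1) => glueStep h n (hup (n+1)) (hd n) (glueK h hup hd n).1 (glueK h hup hd n).2

private lemma glue_bmem' (n : ℕ) :
    ((n : ℝ) + 1) ∈ Set.Icc (((n + 1 : ℕ)) : ℝ) (((n + 1 : ℕ) : ℝ) + 1) := by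
  constructor <;> push_cast <;> linarith

private lemma glueK_succ_def (h : ∀ n : ℕ, ↥(R n) ≃ₜ Y × ↥(Set.Icc (n : ℝ) (n + 1)))
    (hup : ∀ n : ℕ, ⇑(h n) '' {x : ↥(R n) | (x : X) ∈ R (n + 1)} =
      {p : Y × ↥(Set.Icc (n : ℝ) (n + 1)) | (p.2 : ℝ) = n + 1})
    (hd : ∀ n : ℕ, ⇑(h (n+1)) '' {x : ↥(R (n+1)) | (x : X) ∈ R n} =
      {p : Y × ↥(Set.Icc (((n+1:ℕ)) : ℝ) (((n+1:ℕ) : ℝ) + 1)) | (p.2 : ℝ) = ((n+1:ℕ) : ℝ)})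
    (n : ℕ) :
    glueK h hup hd (n+1) =
      glueStep h n (hup (n+1)) (hd n) (glueK h hup hd n).1 (glueK h hup hd n).2 := rfl

private lemma glueStep_fst_apply (h : ∀ n : ℕ, ↥(R n) ≃ₜ Y × ↥(Set.Icc (n : ℝ) (n + 1)))
    (n : ℕ) (hu) (hd) (e) (hinv) (x : ↥(R (n+1))) :
    ((glueStep h n hu hd e hinv).1 x).1 = psi h n hd e hinv ((h (n+1)) x).1 := rfl

private lemma glueStep_snd_apply (h : ∀ n : ℕ, ↥(R n) ≃ₜ Y × ↥(Set.Icc (n : ℝ) (n + 1)))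
    (n : ℕ) (hu) (hd) (e) (hinv) (x : ↥(R (n+1))) :
    ((glueStep h n hu hd e hinv).1 x).2 = ((h (n+1)) x).2 := rfl

private lemma psi_apply_of_mem (h : ∀ n : ℕ, ↥(R n) ≃ₜ Y × ↥(Set.Icc (n : ℝ) (n + 1))) (n : ℕ)
    (hd : ⇑(h (n+1)) '' {x : ↥(R (n+1)) | (x : X) ∈ R n} =
      {p : Y × ↥(Set.Icc (((n+1:ℕ)) : ℝ) (((n+1:ℕ) : ℝ) + 1)) | (p.2 : ℝ) = ((n+1:ℕ) : ℝ)})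
    (e : ↥(R n) ≃ₜ Y × ↥(Set.Icc (n : ℝ) ((n : ℝ) + 1)))
    (hinv : ⇑e '' {x : ↥(R n) | (x : X) ∈ R (n+1)} =
      {p : Y × ↥(Set.Icc (n : ℝ) ((n : ℝ) + 1)) | (p.2 : ℝ) = (n : ℝ) + 1})
    (x : ↥(R (n+1))) (hx : (x : X) ∈ R n) :
    psi h n hd e hinv ((h (n+1)) x).1 = (e ⟨(x : X), hx⟩).1 := by
  have h2 : (((h (n+1)) x).2 : ℝ) = ((n+1:ℕ) : ℝ) := apply_mem_slice (h (n+1)) hd hx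
  have key : (((h (n+1)) x).1, (⟨((n+1:ℕ) : ℝ), glue_bmem n⟩ :
      ↥(Set.Icc (((n+1:ℕ)) : ℝ) (((n+1:ℕ) : ℝ) + 1)))) = (h (n+1)) x :=
    Prod.ext rfl (Subtype.ext h2.symm)
  have hs : (h (n+1)).symm (((h (n+1)) x).1, ⟨((n+1:ℕ) : ℝ), glue_bmem n⟩) = x := by
    rw [key, Homeomorph.symm_apply_apply]
  show (e ⟨((h (n+1)).symm (((h (n+1)) x).1, ⟨((n+1:ℕ) : ℝ), glue_bmem n⟩) : X),
      mem_of_image_slice (h (n+1)) hd rfl⟩).1 = _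
  have hsub : (⟨((h (n+1)).symm (((h (n+1)) x).1, ⟨((n+1:ℕ) : ℝ), glue_bmem n⟩) : X),
      mem_of_image_slice (h (n+1)) hd rfl⟩ : ↥(R n)) = ⟨(x : X), hx⟩ :=
    Subtype.ext (congrArg (Subtype.val : ↥(R (n+1)) → X) hs)
  rw [hsub]

private lemma glueK_succ_fst (h : ∀ n : ℕ, ↥(R n) ≃ₜ Y × ↥(Set.Icc (n : ℝ) (n + 1)))
    (hup : ∀ n : ℕ, ⇑(h n) '' {x : ↥(R n) | (x : X) ∈ R (n + 1)} =
      {p : Y × ↥(Set.Icc (n : ℝ) (n + 1)) | (p.2 : ℝ) = n + 1})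
    (hd : ∀ n : ℕ, ⇑(h (n+1)) '' {x : ↥(R (n+1)) | (x : X) ∈ R n} =
      {p : Y × ↥(Set.Icc (((n+1:ℕ)) : ℝ) (((n+1:ℕ) : ℝ) + 1)) | (p.2 : ℝ) = ((n+1:ℕ) : ℝ)})
    (n : ℕ) (x : ↥(R (n+1))) (hx : (x : X) ∈ R n) :
    ((glueK h hup hd (n+1)).1 x).1 = ((glueK h hup hd n).1 ⟨(x : X), hx⟩).1 := by
  rw [glueK_succ_def, glueStep_fst_apply]
  exact psi_apply_of_mem h n (hd n) (glueK h hup hd n).1 (glueK h hup hd n).2 x hx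

private lemma glueK_succ_snd (h : ∀ n : ℕ, ↥(R n) ≃ₜ Y × ↥(Set.Icc (n : ℝ) (n + 1)))
    (hup : ∀ n : ℕ, ⇑(h n) '' {x : ↥(R n) | (x : X) ∈ R (n + 1)} =
      {p : Y × ↥(Set.Icc (n : ℝ) (n + 1)) | (p.2 : ℝ) = n + 1})
    (hd : ∀ n : ℕ, ⇑(h (n+1)) '' {x : ↥(R (n+1)) | (x : X) ∈ R n} =
      {p : Y × ↥(Set.Icc (((n+1:ℕ)) : ℝ) (((n+1:ℕ) : ℝ) + 1)) | (p.2 : ℝ) = ((n+1:ℕ) : ℝ)})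
    (n : ℕ) (x : ↥(R (n+1))) (hx : (x : X) ∈ R n) :
    (((glueK h hup hd (n+1)).1 x).2 : ℝ) = ((n+1:ℕ) : ℝ) := by
  rw [glueK_succ_def, glueStep_snd_apply]
  exact apply_mem_slice (h (n+1)) (hd n) hx

private lemma glueStep_image (h : ∀ n : ℕ, ↥(R n) ≃ₜ Y × ↥(Set.Icc (n : ℝ) (n + 1)))
    (n : ℕ) (hu) (hd) (e) (hinv) {B : Set X} {c : ℝ}
    (him : ⇑(h (n+1)) '' {x : ↥(R (n+1)) | (x : X) ∈ B} =
      {p : Y × ↥(Set.Icc (((n+1:ℕ)) : ℝ) (((n+1:ℕ) : ℝ) + 1)) | (p.2 : ℝ) = c}) :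
    ⇑(glueStep h n hu hd e hinv).1 '' {x : ↥(R (n+1)) | (x : X) ∈ B} =
      {p : Y × ↥(Set.Icc (((n+1:ℕ)) : ℝ) (((n+1:ℕ) : ℝ) + 1)) | (p.2 : ℝ) = c} := by
  have hcoe : ⇑(glueStep h n hu hd e hinv).1 =
      ⇑((psi h n hd e hinv).prodCongr (Homeomorph.refl
        (↥(Set.Icc (((n+1:ℕ)) : ℝ) (((n+1:ℕ) : ℝ) + 1))))) ∘ ⇑(h (n+1)) := rfl
  rw [hcoe, Set.image_comp, him]
  exact prodMap_image_slice (Z := ↥(Set.Icc (((n+1:ℕ)) : ℝ) (((n+1:ℕ) : ℝ) + 1)))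
    (P := fun b => (b : ℝ) = c) (psi h n hd e hinv).toEquiv

private lemma glueK_succ_down (h : ∀ n : ℕ, ↥(R n) ≃ₜ Y × ↥(Set.Icc (n : ℝ) (n + 1)))
    (hup : ∀ n : ℕ, ⇑(h n) '' {x : ↥(R n) | (x : X) ∈ R (n + 1)} =
      {p : Y × ↥(Set.Icc (n : ℝ) (n + 1)) | (p.2 : ℝ) = n + 1})
    (hd : ∀ n : ℕ, ⇑(h (n+1)) '' {x : ↥(R (n+1)) | (x : X) ∈ R n} =
      {p : Y × ↥(Set.Icc (((n+1:ℕ)) : ℝ) (((n+1:ℕ) : ℝ) + 1)) | (p.2 : ℝ) = ((n+1:ℕ) : ℝ)})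
    (n : ℕ) :
    ⇑(glueK h hup hd (n+1)).1 '' {x : ↥(R (n+1)) | (x : X) ∈ R n} =
      {p : Y × ↥(Set.Icc (((n+1:ℕ)) : ℝ) (((n+1:ℕ) : ℝ) + 1)) |
        (p.2 : ℝ) = ((n+1:ℕ) : ℝ)} := by
  rw [glueK_succ_def]
  exact glueStep_image h n _ _ _ _ (hd n)

end Glue


/-- Gluing product regions: if `X` is covered by a locally finite family of closed sets
`R n`, with `R n ∩ R m = ∅` whenever `m ≥ n + 2`, and each `R n` is homeomorphic to
`Y × [n, n+1]` via a homeomorphism carrying `R n ∩ R (n+1)` onto the slice `Y × {n+1}` and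
(for `n ≥ 1`) `R (n-1) ∩ R n` onto the slice `Y × {n}`, then `X` is homeomorphic to
`Y × [0, ∞)`. -/
theorem homeomorph_prod_Ici_of_glued_product_regions {Y X : Type*} [TopologicalSpace Y]
    [TopologicalSpace X] (R : ℕ → Set X) (hlf : LocallyFinite R)
    (hclosed : ∀ n, IsClosed (R n)) (hcover : ⋃ n, R n = Set.univ)
    (hdisj : ∀ n m : ℕ, n + 2 ≤ m → R n ∩ R m = ∅)
    (h : ∀ n : ℕ, ↥(R n) ≃ₜ Y × ↥(Set.Icc (n : ℝ) (n + 1)))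
    (hup : ∀ n : ℕ, ⇑(h n) '' {x : ↥(R n) | (x : X) ∈ R (n + 1)} =
      {p : Y × ↥(Set.Icc (n : ℝ) (n + 1)) | (p.2 : ℝ) = n + 1})
    (hdown : ∀ n : ℕ, 1 ≤ n → ⇑(h n) '' {x : ↥(R n) | (x : X) ∈ R (n - 1)} =
      {p : Y × ↥(Set.Icc (n : ℝ) (n + 1)) | (p.2 : ℝ) = n}) :
    Nonempty (X ≃ₜ Y × ↥(Set.Ici (0 : ℝ))) := by
  classical
  have hd : ∀ n : ℕ, ⇑(h (n+1)) '' {x : ↥(R (n+1)) | (x : X) ∈ R n} =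
      {p : Y × ↥(Set.Icc (((n+1:ℕ)) : ℝ) (((n+1:ℕ) : ℝ) + 1)) |
        (p.2 : ℝ) = ((n+1:ℕ) : ℝ)} := by
    intro n
    have := hdown (n+1) (Nat.le_add_left 1 n)
    simpa using this
  set k : ∀ n : ℕ, ↥(R n) ≃ₜ Y × ↥(Set.Icc (n : ℝ) ((n : ℝ) + 1)) :=
    fun n => (glueK h hup hd n).1 with hkdef
  -- the forward map
  have hnonneg : ∀ n (x : ↥(R n)), (0:ℝ) ≤ ((k n x).2 : ℝ) := fun n x =>
    le_trans (Nat.cast_nonneg n) (k n x).2.2.1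
  set fF : ∀ n : ℕ, ↥(R n) → Y × ↥(Set.Ici (0:ℝ)) :=
    fun n x => ((k n x).1, ⟨((k n x).2 : ℝ), hnonneg n x⟩) with hfFdef
  have hagree : ∀ (n : ℕ) (x : X) (hx : x ∈ R n) (hx' : x ∈ R (n+1)),
      fF n ⟨x, hx⟩ = fF (n+1) ⟨x, hx'⟩ := by
    intro n x hx hx'
    refine Prod.ext ?_ (Subtype.ext ?_)
    · exact (glueK_succ_fst h hup hd n ⟨x, hx'⟩ hx).symm
    · show ((k n ⟨x, hx⟩).2 : ℝ) = ((k (n+1) ⟨x, hx'⟩).2 : ℝ)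
      have h1 : ((k n ⟨x, hx⟩).2 : ℝ) = (n : ℝ) + 1 :=
        apply_mem_slice (k n) (glueK h hup hd n).2 hx'
      have h2 : ((k (n+1) ⟨x, hx'⟩).2 : ℝ) = ((n+1:ℕ) : ℝ) :=
        glueK_succ_snd h hup hd n ⟨x, hx'⟩ hx
      rw [h1, h2]
      push_cast; ring
  have hfF : ∀ (i j) (x : X) (hxi : x ∈ R i) (hxj : x ∈ R j),
      fF i ⟨x, hxi⟩ = fF j ⟨x, hxj⟩ := by
    intro i j x hxi hxj
    rcases Nat.lt_trichotomy i j with hij | rfl | hij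
    · rcases Nat.lt_or_ge j (i+2) with h2 | h2
      · obtain rfl : j = i + 1 := by omega
        exact hagree i x hxi hxj
      · exact absurd (Set.mem_inter hxi hxj)
          (by rw [hdisj i j h2]; exact Set.notMem_empty x)
    · rfl
    · rcases Nat.lt_or_ge i (j+2) with h2 | h2
      · obtain rfl : i = j + 1 := by omega
        exact (hagree j x hxj hxi).symm
      · exact absurd (Set.mem_inter hxj hxi)
          (by rw [hdisj j i h2]; exact Set.notMem_empty x)
  set F : X → Y × ↥(Set.Ici (0:ℝ)) := Set.liftCover R fF hfF hcover with hFdef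
  have hFcont : Continuous F := by
    apply hlf.continuous hcover hclosed
    intro n
    rw [continuousOn_iff_continuous_restrict]
    have hres : Set.domRestrict (R n) F = fF n :=
      funext fun x => Set.liftCover_coe (S := R) (f := fF) (hf := hfF) (hS := hcover) x
    rw [hres]
    exact Continuous.prodMk (continuous_fst.comp (k n).continuous)
      (Continuous.subtype_mk
        (continuous_subtype_val.comp (continuous_snd.comp (k n).continuous)) _)
  -- the inverse map
  set T : ℕ → Set (Y × ↥(Set.Ici (0:ℝ))) :=
    fun n => {p | (p.2 : ℝ) ∈ Set.Icc (n : ℝ) ((n : ℝ) + 1)} with hTdef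
  have hTclosed : ∀ n, IsClosed (T n) := fun n =>
    IsClosed.preimage (continuous_subtype_val.comp continuous_snd) isClosed_Icc
  have hTcover : ⋃ n, T n = Set.univ := by
    ext p
    simp only [Set.mem_iUnion, Set.mem_univ, iff_true]
    exact ⟨⌊(p.2 : ℝ)⌋₊, Nat.floor_le p.2.2, (Nat.lt_floor_add_one _).le⟩
  have hTlf : LocallyFinite T := by
    intro p
    refine ⟨{q : Y × ↥(Set.Ici (0:ℝ)) | (q.2 : ℝ) ∈ Set.Ioo ((p.2 : ℝ) - 1) ((p.2 : ℝ) + 1)},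
      ?_, ?_⟩
    · refine IsOpen.mem_nhds
        (IsOpen.preimage (continuous_subtype_val.comp continuous_snd) isOpen_Ioo) ?_
      exact ⟨by linarith, by linarith⟩
    · apply Set.Finite.subset (Set.finite_Iic ⌈(p.2 : ℝ) + 1⌉₊)
      rintro n ⟨q, hq1, hq2⟩
      simp only [Set.mem_Iic]
      have h1 : (n : ℝ) ≤ (q.2 : ℝ) := hq1.1
      have h2 : (q.2 : ℝ) < (p.2 : ℝ) + 1 := hq2.2
      have : (n : ℝ) ≤ ((⌈(p.2 : ℝ) + 1⌉₊ : ℕ) : ℝ) :=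
        le_trans (h1.trans h2.le) (Nat.le_ceil _)
      exact_mod_cast this
  set fG : ∀ n : ℕ, ↥(T n) → X :=
    fun n p => ((k n).symm (p.1.1, ⟨((p.1.2 : ℝ)), p.2⟩) : X) with hfGdef
  have hsymm : ∀ (n : ℕ) (y : Y),
      ((k n).symm (y, ⟨(n : ℝ) + 1, glue_tmem n⟩) : X) =
      ((k (n+1)).symm (y, ⟨(n : ℝ) + 1, glue_bmem' n⟩) : X) := by
    intro n y
    set x : ↥(R (n+1)) := (k (n+1)).symm (y, ⟨(n : ℝ) + 1, glue_bmem' n⟩) with hxdef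
    have hcast : ((n : ℝ) + 1) = ((n+1:ℕ) : ℝ) := by push_cast; ring
    have hx : (x : X) ∈ R n :=
      mem_of_image_slice (k (n+1)) (glueK_succ_down h hup hd n) hcast
    have hkx : k (n+1) x = (y, ⟨(n : ℝ) + 1, glue_bmem' n⟩) := by
      rw [hxdef, Homeomorph.apply_symm_apply]
    have hfst : (k n ⟨(x : X), hx⟩).1 = y := by
      have := glueK_succ_fst h hup hd n x hx
      rw [hkx] at this
      exact this.symm
    have hsnd : ((k n ⟨(x : X), hx⟩).2 : ℝ) = (n : ℝ) + 1 :=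
      apply_mem_slice (k n) (glueK h hup hd n).2 x.2
    have hkn : k n ⟨(x : X), hx⟩ = (y, ⟨(n : ℝ) + 1, glue_tmem n⟩) := by
      refine Prod.ext hfst (Subtype.ext hsnd)
    have : (k n).symm (y, ⟨(n : ℝ) + 1, glue_tmem n⟩) = ⟨(x : X), hx⟩ := by
      rw [← hkn, Homeomorph.symm_apply_apply]
    rw [this]
  have hfG : ∀ (i j) (p : Y × ↥(Set.Ici (0:ℝ))) (hpi : p ∈ T i) (hpj : p ∈ T j),
      fG i ⟨p, hpi⟩ = fG j ⟨p, hpj⟩ := by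
    have key : ∀ (i : ℕ) (p : Y × ↥(Set.Ici (0:ℝ))) (hpi : p ∈ T i) (hpj : p ∈ T (i+1)),
        fG i ⟨p, hpi⟩ = fG (i+1) ⟨p, hpj⟩ := by
      intro i p hpi hpj
      have heq : (p.2 : ℝ) = (i : ℝ) + 1 := by
        have h1 : (p.2 : ℝ) ≤ (i : ℝ) + 1 := hpi.2
        have h2 : ((i+1:ℕ) : ℝ) ≤ (p.2 : ℝ) := hpj.1
        push_cast at h2
        linarith
      show ((k i).symm (p.1, ⟨(p.2 : ℝ), hpi⟩) : X) =
        ((k (i+1)).symm (p.1, ⟨(p.2 : ℝ), hpj⟩) : X)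
      have e1 : (⟨(p.2 : ℝ), hpi⟩ : ↥(Set.Icc (i : ℝ) ((i : ℝ) + 1))) =
          ⟨(i : ℝ) + 1, glue_tmem i⟩ := Subtype.ext heq
      have e2 : (⟨(p.2 : ℝ), hpj⟩ : ↥(Set.Icc (((i+1:ℕ)) : ℝ) (((i+1:ℕ) : ℝ) + 1))) =
          ⟨(i : ℝ) + 1, glue_bmem' i⟩ := Subtype.ext heq
      rw [e1, e2]
      exact hsymm i p.1
    intro i j p hpi hpj
    rcases Nat.lt_trichotomy i j with hij | rfl | hij
    · rcases Nat.lt_or_ge j (i+2) with h2 | h2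
      · obtain rfl : j = i + 1 := by omega
        exact key i p hpi hpj
      · exfalso
        have h1 : (p.2 : ℝ) ≤ (i : ℝ) + 1 := hpi.2
        have h3 : (j : ℝ) ≤ (p.2 : ℝ) := hpj.1
        have : ((i+2:ℕ) : ℝ) ≤ (j : ℝ) := by exact_mod_cast h2
        push_cast at this
        linarith
    · rfl
    · rcases Nat.lt_or_ge i (j+2) with h2 | h2
      · obtain rfl : i = j + 1 := by omega
        exact (key j p hpj hpi).symm
      · exfalso
        have h1 : (p.2 : ℝ) ≤ (j : ℝ) + 1 := hpj.2
        have h3 : (i : ℝ) ≤ (p.2 : ℝ) := hpi.1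
        have : ((j+2:ℕ) : ℝ) ≤ (i : ℝ) := by exact_mod_cast h2
        push_cast at this
        linarith
  set G : Y × ↥(Set.Ici (0:ℝ)) → X := Set.liftCover T fG hfG hTcover with hGdef
  have hGcont : Continuous G := by
    apply hTlf.continuous hTcover hTclosed
    intro n
    rw [continuousOn_iff_continuous_restrict]
    have hres : Set.domRestrict (T n) G = fG n :=
      funext fun p => Set.liftCover_coe (S := T) (f := fG) (hf := hfG) (hS := hTcover) p
    rw [hres]
    refine continuous_subtype_val.comp ((k n).symm.continuous.comp ?_)
    refine Continuous.prodMk (continuous_fst.comp continuous_subtype_val) ?_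
    exact Continuous.subtype_mk
      (continuous_subtype_val.comp (continuous_snd.comp continuous_subtype_val)) _
  have hGF : ∀ x, G (F x) = x := by
    intro x
    obtain ⟨n, hx⟩ : ∃ n, x ∈ R n := Set.iUnion_eq_univ_iff.mp hcover x
    have hFx : F x = fF n ⟨x, hx⟩ := Set.liftCover_of_mem hx
    have hmem : F x ∈ T n := by
      rw [hFx]
      exact (k n ⟨x, hx⟩).2.2
    have hGx : G (F x) = fG n ⟨F x, hmem⟩ := Set.liftCover_of_mem hmem
    rw [hGx]
    show ((k n).symm ((F x).1, ⟨((F x).2 : ℝ), hmem⟩) : X) = x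
    have hpair : ((F x).1, (⟨((F x).2 : ℝ), hmem⟩ :
        ↥(Set.Icc (n : ℝ) ((n : ℝ) + 1)))) = k n ⟨x, hx⟩ := by
      have h1 : (F x).1 = (fF n ⟨x, hx⟩).1 := congrArg Prod.fst hFx
      have h2 : ((F x).2 : ℝ) = ((fF n ⟨x, hx⟩).2 : ℝ) :=
        congrArg (fun q : Y × ↥(Set.Ici (0:ℝ)) => ((q.2 : ℝ))) hFx
      exact Prod.ext h1 (Subtype.ext h2)
    rw [hpair, Homeomorph.symm_apply_apply]
  have hFG : ∀ p, F (G p) = p := by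
    intro p
    obtain ⟨n, hp⟩ : ∃ n, p ∈ T n := Set.iUnion_eq_univ_iff.mp hTcover p
    have hGp : G p = fG n ⟨p, hp⟩ := Set.liftCover_of_mem hp
    have hzR : G p ∈ R n := by
      rw [hGp]
      exact ((k n).symm (p.1, ⟨(p.2 : ℝ), hp⟩)).2
    have hFz : F (G p) = fF n ⟨G p, hzR⟩ := Set.liftCover_of_mem hzR
    rw [hFz]
    have hsub : (⟨G p, hzR⟩ : ↥(R n)) = (k n).symm (p.1, ⟨(p.2 : ℝ), hp⟩) :=
      Subtype.ext hGp
    rw [hsub]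
    have happ := (k n).apply_symm_apply (p.1, ⟨(p.2 : ℝ), hp⟩)
    have h1 : (k n ((k n).symm (p.1, ⟨(p.2 : ℝ), hp⟩))).1 = p.1 := congrArg Prod.fst happ
    have h2 : ((k n ((k n).symm (p.1, ⟨(p.2 : ℝ), hp⟩))).2 : ℝ) = (p.2 : ℝ) :=
      congrArg (fun r : Y × ↥(Set.Icc (n : ℝ) ((n : ℝ) + 1)) => ((r.2 : ℝ))) happ
    exact Prod.ext h1 (Subtype.ext h2)
  exact ⟨⟨⟨F, G, hGF, hFG⟩, hFcont, hGcont⟩⟩
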